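/- Let Y be a càdlàg integrable adapted process on [0,T] with conditional variation CV(Y) < ∞, and let a < b be real numbers. Then E[N^{a,b}(Y)] ≤ (1/(b−a))(|a| + CV(Y) + E[sup_{t∈[0,T]}|Y_t|]), where N^{a,b}(Y) is the number of up-crossings of the interval [a,b] by the path of Y. -/

import Mathlib

open MeasureTheory

/-- `upcrossProp Y T a b n ω` : the path `s ↦ Y s ω` performs at least `n` upcrossings of the
interval `[a,b]` on `[0,T]`. -/
def upcrossProp {Ω : Type*} (Y : ℝ → Ω → ℝ) (T a b : ℝ) (n : ℕ) (ω : Ω) : Prop :=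
  ∃ u v : Fin n → ℝ,
    (∀ i, u i ∈ Set.Icc 0 T ∧ v i ∈ Set.Icc 0 T ∧ u i < v i ∧
      Y (u i) ω < a ∧ b < Y (v i) ω) ∧
    ∀ i j : Fin n, i < j → v i < u j

/-- If a sequence has `n` alternating witnesses (below `a` then above `b`) at indices `< M`,
then `upcrossingsBefore a b f M ≥ n`. -/
lemma seq_upcross {Ω : Type*} (a b : ℝ) (hab : a < b) (f : ℕ → Ω → ℝ) (ω : Ω) (M n : ℕ)
    (p q : Fin n → ℕ) (hpq : ∀ i, p i < q i) (hqp : ∀ i j, i < j → q i < p j)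
    (hqM : ∀ i, q i < M) (hfa : ∀ i, f (p i) ω < a) (hfb : ∀ i, b < f (q i) ω) :
    n ≤ upcrossingsBefore a b f M ω := by
  have aux : ∀ c : ℕ, ∀ h : c < n, upperCrossingTime a b f M (c + 1) ω ≤ q ⟨c, h⟩ := by
    intro c
    induction c with
    | zero =>
      intro h
      have h0 : upperCrossingTime a b f M 0 ω ≤ p ⟨0, h⟩ := by
        rw [upperCrossingTime_zero]; exact Nat.zero_le _
      have hlow : lowerCrossingTime a b f M 0 ω ≤ p ⟨0, h⟩ :=
        hittingBtwn_le_of_mem h0 (le_of_lt ((hpq _).trans (hqM _))) (le_of_lt (hfa _))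
      rw [upperCrossingTime_succ_eq]
      exact hittingBtwn_le_of_mem (hlow.trans (hpq _).le) (hqM _).le (le_of_lt (hfb _))
    | succ c ih =>
      intro h
      have hc : c < n := Nat.lt_of_succ_lt h
      have h0 : upperCrossingTime a b f M (c + 1) ω ≤ p ⟨c + 1, h⟩ :=
        (ih hc).trans (le_of_lt (hqp ⟨c, hc⟩ ⟨c + 1, h⟩ (by simp)))
      have hlow : lowerCrossingTime a b f M (c + 1) ω ≤ p ⟨c + 1, h⟩ :=
        hittingBtwn_le_of_mem h0 (le_of_lt ((hpq _).trans (hqM _))) (le_of_lt (hfa _))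
      rw [upperCrossingTime_succ_eq]
      exact hittingBtwn_le_of_mem (hlow.trans (hpq _).le) (hqM _).le (le_of_lt (hfb _))
  rcases Nat.eq_zero_or_pos n with hn | hn
  · simp [hn]
  · obtain ⟨n', rfl⟩ : ∃ n', n = n' + 1 := ⟨n - 1, by omega⟩
    have : upperCrossingTime a b f M (n' + 1) ω < M :=
      lt_of_le_of_lt (aux n' (Nat.lt_succ_self n')) (hqM _)
    exact le_csSup (upperCrossingTime_lt_bddAbove hab) this

/-- Variant of `mul_upcrossingsBefore_le` without the hypothesis `a ≤ f N ω`, at the cost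
of an extra `(a - f M ω)⁺` term. -/
lemma myA {Ω : Type*} (a b : ℝ) (f : ℕ → Ω → ℝ) (M : ℕ) (ω : Ω) (hab : a < b) :
    (b - a) * (upcrossingsBefore a b f M ω : ℝ) ≤
    (∑ k ∈ Finset.range M, upcrossingStrat a b f M k ω * (f (k + 1) - f k) ω) + (a - f M ω)⁺ := by
  classical
  by_cases hM : M = 0
  · simp [hM, posPart_nonneg]
  simp_rw [upcrossingStrat, Finset.sum_mul, ←
    Set.indicator_mul_left _ _ (fun x ↦ (f (x + 1) - f x) ω), Pi.one_apply, Pi.sub_apply, one_mul]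
  rw [Finset.sum_comm]
  have h₁ : ∀ k, ∑ n ∈ Finset.range M, (Set.Ico (lowerCrossingTime a b f M k ω)
      (upperCrossingTime a b f M (k + 1) ω)).indicator (fun m => f (m + 1) ω - f m ω) n =
      stoppedValue f (fun ω ↦ (upperCrossingTime a b f M (k + 1) ω : ℕ)) ω -
        stoppedValue f (fun ω ↦ (lowerCrossingTime a b f M k ω : ℕ)) ω := by
    intro k
    rw [Finset.sum_indicator_eq_sum_filter, (_ : Finset.filter (fun i => i ∈ Set.Ico
      (lowerCrossingTime a b f M k ω) (upperCrossingTime a b f M (k + 1) ω)) (Finset.range M) =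
      Finset.Ico (lowerCrossingTime a b f M k ω) (upperCrossingTime a b f M (k + 1) ω)),
      Finset.sum_Ico_eq_add_neg _ lowerCrossingTime_le_upperCrossingTime_succ,
      Finset.sum_range_sub fun n => f n ω, Finset.sum_range_sub fun n => f n ω, neg_sub,
      sub_add_sub_cancel]
    · rfl
    · ext i
      simp only [Set.mem_Ico, Finset.mem_filter, Finset.mem_range, Finset.mem_Ico,
        and_iff_right_iff_imp, and_imp]
      exact fun _ h => lt_of_lt_of_le h upperCrossingTime_le
  simp_rw [h₁]
  set U := upcrossingsBefore a b f M ω with hU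
  have hUM : U ≤ M := upcrossingsBefore_le f ω hab
  have key : ∑ _k ∈ Finset.range U, (b - a) - (a - f M ω)⁺ ≤
      ∑ k ∈ Finset.range M, (stoppedValue f (fun ω ↦ (upperCrossingTime a b f M (k + 1) ω : ℕ)) ω -
        stoppedValue f (fun ω ↦ (lowerCrossingTime a b f M k ω : ℕ)) ω) := by
    rw [← Finset.sum_range_add_sum_Ico _ hUM]
    have t1 : ∑ _k ∈ Finset.range U, (b - a) ≤
        ∑ k ∈ Finset.range U, (stoppedValue f (fun ω ↦ (upperCrossingTime a b f M (k + 1) ω : ℕ)) ω -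
          stoppedValue f (fun ω ↦ (lowerCrossingTime a b f M k ω : ℕ)) ω) := by
      refine Finset.sum_le_sum fun i hi =>
        le_sub_of_le_upcrossingsBefore (zero_lt_iff.2 hM) hab ?_
      rwa [Finset.mem_range] at hi
    have t2 : -(a - f M ω)⁺ ≤
        ∑ k ∈ Finset.Ico U M, (stoppedValue f (fun ω ↦ (upperCrossingTime a b f M (k + 1) ω : ℕ)) ω -
          stoppedValue f (fun ω ↦ (lowerCrossingTime a b f M k ω : ℕ)) ω) := by
      rcases eq_or_lt_of_le hUM with h | h
      · rw [h]; simp [posPart_nonneg]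
      · rw [← Finset.insert_Ico_add_one_left_eq_Ico h, Finset.sum_insert (by simp)]
        have hrest : ∑ k ∈ Finset.Ico (U + 1) M,
            (stoppedValue f (fun ω ↦ (upperCrossingTime a b f M (k + 1) ω : ℕ)) ω -
              stoppedValue f (fun ω ↦ (lowerCrossingTime a b f M k ω : ℕ)) ω) = 0 := by
          refine Finset.sum_eq_zero fun k hk => ?_
          refine sub_eq_zero_of_upcrossingsBefore_lt hab ?_
          rw [Finset.mem_Ico] at hk
          omega
        rw [hrest, add_zero]
        have hup : upperCrossingTime a b f M (U + 1) ω = M :=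
          upperCrossingTime_eq_of_upcrossingsBefore_lt hab (Nat.lt_succ_self _)
        simp only [stoppedValue, hup]
        by_cases heq : lowerCrossingTime a b f M U ω = M
        · rw [heq, sub_self]; simp [posPart_nonneg]
        · have hsv : f (lowerCrossingTime a b f M U ω) ω ≤ a :=
            stoppedValue_lowerCrossingTime heq
          have : a - f M ω ≤ (a - f M ω)⁺ := le_posPart _
          change -(a - f M ω)⁺ ≤ f M ω - f (lowerCrossingTime a b f M U ω) ω
          linarith
    linarith
  calc (b - a) * (U : ℝ) = ∑ _k ∈ Finset.range U, (b - a) := by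
        rw [Finset.sum_const, Finset.card_range, nsmul_eq_mul, mul_comm]
    _ ≤ _ := by linarith

lemma myB {Ω : Type*} {m : MeasurableSpace Ω} (μ : Measure Ω) [IsProbabilityMeasure μ]
    (𝒢 : Filtration ℕ m) {f : ℕ → Ω → ℝ} (hf : Adapted 𝒢 f)
    (hint : ∀ n, Integrable (f n) μ) (a b : ℝ) (M j : ℕ) :
    ∫ ω, upcrossingStrat a b f M j ω * (f (j + 1) - f j) ω ∂μ ≤
      ∫ ω, |(μ[f (j + 1) - f j | 𝒢 j]) ω| ∂μ := by
  set H := upcrossingStrat a b f M j with hHdef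
  have hH : StronglyMeasurable[𝒢 j] H := hf.stronglyAdapted.upcrossingStrat j
  have hD : Integrable (f (j + 1) - f j) μ := (hint _).sub (hint _)
  have hHbdd : ∀ ω, ‖H ω‖ ≤ 1 := fun ω => by
    rw [Real.norm_eq_abs, abs_of_nonneg upcrossingStrat_nonneg]
    exact upcrossingStrat_le_one
  have hHD : Integrable (H * (f (j + 1) - f j)) μ :=
    hD.bdd_mul (c := 1) (hH.mono (𝒢.le j)).aestronglyMeasurable (Filter.Eventually.of_forall hHbdd)
  have key : μ[H * (f (j + 1) - f j) | 𝒢 j] =ᵐ[μ] H * μ[f (j + 1) - f j | 𝒢 j] :=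
    condExp_mul_of_stronglyMeasurable_left hH hHD hD
  have h1 : ∫ ω, H ω * (f (j + 1) - f j) ω ∂μ
      = ∫ ω, (μ[H * (f (j + 1) - f j) | 𝒢 j]) ω ∂μ :=
    (integral_condExp (𝒢.le j)).symm
  rw [h1, integral_congr_ae key]
  have hcint : Integrable (μ[f (j + 1) - f j | 𝒢 j]) μ := integrable_condExp
  have hmul : Integrable (H * μ[f (j + 1) - f j | 𝒢 j]) μ :=
    hcint.bdd_mul (c := 1) (hH.mono (𝒢.le j)).aestronglyMeasurable (Filter.Eventually.of_forall hHbdd)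
  refine integral_mono hmul hcint.abs fun ω => ?_
  calc H ω * (μ[f (j + 1) - f j | 𝒢 j]) ω
      ≤ |H ω * (μ[f (j + 1) - f j | 𝒢 j]) ω| := le_abs_self _
    _ = |H ω| * |(μ[f (j + 1) - f j | 𝒢 j]) ω| := abs_mul _ _
    _ ≤ 1 * |(μ[f (j + 1) - f j | 𝒢 j]) ω| := by
        have := hHbdd ω; rw [Real.norm_eq_abs] at this
        exact mul_le_mul_of_nonneg_right this (abs_nonneg _)
    _ = _ := one_mul _

lemma path_bdd {Ω : Type*} (Y : ℝ → Ω → ℝ) (T : ℝ)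
    (hY_rc : ∀ ω s, ContinuousWithinAt (fun u => Y u ω) (Set.Ici s) s)
    (hY_ll : ∀ ω s, ∃ l, Filter.Tendsto (fun u => Y u ω)
      (nhdsWithin s (Set.Iio s)) (nhds l)) (ω : Ω) :
    ∃ C, 0 ≤ C ∧ ∀ s ∈ Set.Icc (0:ℝ) T, |Y s ω| ≤ C := by
  have loc : ∀ s : ℝ, ∃ ε > 0, ∃ C, ∀ u, |u - s| < ε → |Y u ω| ≤ C := by
    intro s
    obtain ⟨l, hl⟩ := hY_ll ω s
    rw [Metric.tendsto_nhdsWithin_nhds] at hl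
    obtain ⟨δ₂, hδ₂, h2⟩ := hl 1 one_pos
    have hrc := hY_rc ω s
    rw [Metric.continuousWithinAt_iff] at hrc
    obtain ⟨δ₁, hδ₁, h1⟩ := hrc 1 one_pos
    refine ⟨min δ₁ δ₂, lt_min hδ₁ hδ₂, max (|Y s ω| + 1) (|l| + 1), fun u hu => ?_⟩
    rcases le_or_gt s u with h | h
    · have := h1 (Set.mem_Ici.2 h) (by rw [Real.dist_eq]; exact hu.trans_le (min_le_left _ _))
      rw [Real.dist_eq] at this
      calc |Y u ω| ≤ |Y u ω - Y s ω| + |Y s ω| := by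
            have := abs_sub_abs_le_abs_sub (Y u ω) (Y s ω); linarith [abs_nonneg (Y u ω - Y s ω)]
        _ ≤ |Y s ω| + 1 := by linarith
        _ ≤ _ := le_max_left _ _
    · have := h2 (Set.mem_Iio.2 h) (by rw [Real.dist_eq]; exact hu.trans_le (min_le_right _ _))
      rw [Real.dist_eq] at this
      calc |Y u ω| ≤ |Y u ω - l| + |l| := by
            have := abs_sub_abs_le_abs_sub (Y u ω) l; linarith [abs_nonneg (Y u ω - l)]
        _ ≤ |l| + 1 := by linarith
        _ ≤ _ := le_max_right _ _
  choose ε hε C hC using loc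
  have hcov : Set.Icc (0:ℝ) T ⊆ ⋃ s : ℝ, Metric.ball s (ε s) :=
    fun x _ => Set.mem_iUnion.2 ⟨x, Metric.mem_ball_self (hε x)⟩
  obtain ⟨t, ht⟩ := isCompact_Icc.elim_finite_subcover (fun s => Metric.ball s (ε s))
    (fun s => Metric.isOpen_ball) hcov
  refine ⟨∑ s ∈ t, |C s|, Finset.sum_nonneg fun s _ => abs_nonneg _, fun u hu => ?_⟩
  obtain ⟨s, hs, hball⟩ := Set.mem_iUnion₂.1 (ht hu)
  rw [Metric.mem_ball, Real.dist_eq] at hball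
  calc |Y u ω| ≤ C s := hC s u hball
    _ ≤ |C s| := le_abs_self _
    _ ≤ ∑ s ∈ t, |C s| := Finset.single_le_sum (fun i _ => abs_nonneg (C i)) hs

lemma partition_core {Ω : Type*} {m : MeasurableSpace Ω} (μ : Measure Ω) [IsProbabilityMeasure μ]
    (𝒢 : Filtration ℕ m) (f : ℕ → Ω → ℝ) (hfad : Adapted 𝒢 f)
    (hfint : ∀ n, Integrable (f n) μ) (a b : ℝ) (hab : a < b) (N : ℕ) (cv' : ℝ)
    (hcv' : ∑ j ∈ Finset.range N, ∫ ω, |(μ[f (j + 1) - f j | 𝒢 j]) ω| ∂μ ≤ cv') :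
    (b - a) * ∫ ω, (upcrossingsBefore a b f N ω : ℝ) ∂μ ≤
      cv' + ∫ ω, (a - f N ω)⁺ ∂μ := by
  have hUint : Integrable (fun ω => (upcrossingsBefore a b f N ω : ℝ)) μ :=
    hfad.stronglyAdapted.integrable_upcrossingsBefore hab
  have hterm : ∀ j, Integrable
      (fun ω => upcrossingStrat a b f N j ω * (f (j + 1) - f j) ω) μ := by
    intro j
    refine (((hfint _).sub (hfint _))).bdd_mul
      (c := 1)
      (((hfad.stronglyAdapted.upcrossingStrat j).mono (𝒢.le j)).aestronglyMeasurable) (Filter.Eventually.of_forall fun ω => ?_)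
    rw [Real.norm_eq_abs, abs_of_nonneg upcrossingStrat_nonneg]
    exact upcrossingStrat_le_one
  have hG : Integrable
      (fun ω => ∑ j ∈ Finset.range N, upcrossingStrat a b f N j ω * (f (j + 1) - f j) ω) μ :=
    integrable_finset_sum _ fun j _ => hterm j
  have hP : Integrable (fun ω => (a - f N ω)⁺) μ := by
    have : Integrable (fun ω => max (a - f N ω) 0) μ :=
      (((integrable_const a).sub (hfint N))).pos_part
    simpa [posPart_def] using this
  rw [← integral_const_mul]
  have step1 : ∫ ω, (b - a) * (upcrossingsBefore a b f N ω : ℝ) ∂μ ≤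
      ∫ ω, ((∑ j ∈ Finset.range N, upcrossingStrat a b f N j ω * (f (j + 1) - f j) ω)
        + (a - f N ω)⁺) ∂μ := by
    refine integral_mono (hUint.const_mul _) (hG.add hP) fun ω => ?_
    exact myA a b f N ω hab
  refine step1.trans ?_
  rw [integral_add hG hP]
  refine add_le_add ?_ le_rfl
  rw [integral_finset_sum _ fun j _ => hterm j]
  exact le_trans (Finset.sum_le_sum fun j _ => myB μ 𝒢 hfad hfint a b N j) hcv'

def upcrossWit {Ω : Type*} (Y : ℝ → Ω → ℝ) (a b : ℝ) (F : Finset ℝ) (n : ℕ) (ω : Ω) : Prop :=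
  ∃ u v : Fin n → ℝ,
    (∀ i, u i ∈ F ∧ v i ∈ F ∧ u i < v i ∧ Y (u i) ω < a ∧ b < Y (v i) ω) ∧
    ∀ i j : Fin n, i < j → v i < u j

lemma upcrossWit_mono {Ω : Type*} {Y : ℝ → Ω → ℝ} {a b : ℝ} {F F' : Finset ℝ} (h : F ⊆ F')
    {n : ℕ} {ω : Ω} (hw : upcrossWit Y a b F n ω) : upcrossWit Y a b F' n ω := by
  obtain ⟨u, v, h1, h2⟩ := hw
  exact ⟨u, v, fun i => ⟨h (h1 i).1, h (h1 i).2.1, (h1 i).2.2⟩, h2⟩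

lemma upcrossWit_measurableSet {Ω : Type*} {m : MeasurableSpace Ω} (ℱ : Filtration ℝ m)
    {Y : ℝ → Ω → ℝ} (hY : Adapted ℱ Y) (a b : ℝ) (F : Finset ℝ) (n : ℕ) :
    MeasurableSet {ω | upcrossWit Y a b F n ω} := by
  have hmeas : ∀ t : ℝ, Measurable (Y t) := fun t =>
    (hY t).mono (ℱ.le t) le_rfl
  have heq : {ω | upcrossWit Y a b F n ω} =
      ⋃ (p : (Fin n → F) × (Fin n → F))
        (_ : (∀ i, ((p.1 i : ℝ) < (p.2 i : ℝ))) ∧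
          ∀ i j : Fin n, i < j → (p.2 i : ℝ) < (p.1 j : ℝ)),
        ⋂ i : Fin n, ({ω | Y (p.1 i) ω < a} ∩ {ω | b < Y (p.2 i) ω}) := by
    ext ω
    simp only [Set.mem_setOf_eq, Set.mem_iUnion, Set.mem_iInter, Set.mem_inter_iff]
    constructor
    · rintro ⟨u, v, h1, h2⟩
      exact ⟨(fun i => ⟨u i, (h1 i).1⟩, fun i => ⟨v i, (h1 i).2.1⟩),
        ⟨fun i => (h1 i).2.2.1, fun i j hij => h2 i j hij⟩,
        fun i => ⟨(h1 i).2.2.2.1, (h1 i).2.2.2.2⟩⟩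
    · rintro ⟨p, ⟨hlt, hord⟩, h⟩
      exact ⟨fun i => (p.1 i : ℝ), fun i => (p.2 i : ℝ),
        fun i => ⟨(p.1 i).2, (p.2 i).2, hlt i, (h i).1, (h i).2⟩, hord⟩
  rw [heq]
  refine MeasurableSet.iUnion fun p => MeasurableSet.iUnion fun _ =>
    MeasurableSet.iInter fun i => MeasurableSet.inter ?_ ?_
  · exact measurableSet_lt (hmeas _) measurable_const
  · exact measurableSet_lt measurable_const (hmeas _)

/-- Rational (or `T`) approximation of upcrossing witnesses, using right-continuity. -/
lemma upcross_approx {Ω : Type*} (Y : ℝ → Ω → ℝ) (T a b : ℝ)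
    (hY_rc : ∀ ω s, ContinuousWithinAt (fun u => Y u ω) (Set.Ici s) s)
    (n : ℕ) (ω : Ω) (h : upcrossProp Y T a b n ω) :
    ∃ u v : Fin n → ℝ,
      (∀ i, u i ∈ insert T {x : ℝ | x ∈ Set.Icc 0 T ∧ ∃ q : ℚ, (q : ℝ) = x} ∧
        v i ∈ insert T {x : ℝ | x ∈ Set.Icc 0 T ∧ ∃ q : ℚ, (q : ℝ) = x} ∧
        u i < v i ∧ Y (u i) ω < a ∧ b < Y (v i) ω) ∧
      ∀ i j : Fin n, i < j → v i < u j := by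
  set DD := insert T {x : ℝ | x ∈ Set.Icc 0 T ∧ ∃ q : ℚ, (q : ℝ) = x} with hDD
  obtain ⟨u, v, h1, h2⟩ := h
  have right_nbhd : ∀ (s : ℝ) (P : Set ℝ), IsOpen P → Y s ω ∈ P →
      ∃ w, s < w ∧ ∀ x ∈ Set.Ico s w, Y x ω ∈ P := by
    intro s P hP hmem
    have hev : {x | Y x ω ∈ P} ∈ nhdsWithin s (Set.Ici s) := (hY_rc ω s) (hP.mem_nhds hmem)
    obtain ⟨w, hw, hsub⟩ := mem_nhdsGE_iff_exists_Ico_subset.1 hev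
    exact ⟨w, hw, fun x hx => hsub hx⟩
  have key : ∀ i : Fin n, ∃ qr : ℝ × ℝ,
      qr.1 ∈ DD ∧ qr.2 ∈ DD ∧ u i < qr.1 ∧ qr.1 < v i ∧ v i ≤ qr.2 ∧
      Y qr.1 ω < a ∧ b < Y qr.2 ω ∧ ∀ j, i < j → qr.2 < u j := by
    intro i
    obtain ⟨hu_mem, hv_mem, huv, hYu, hYv⟩ := h1 i
    obtain ⟨w, hw, hPw⟩ := right_nbhd (u i) (Set.Iio a) isOpen_Iio hYu
    have hltq : u i < min w (v i) := lt_min hw huv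
    obtain ⟨q, hq1, hq2⟩ := exists_rat_btwn hltq
    have hqv : (q : ℝ) < v i := hq2.trans_le (min_le_right _ _)
    have hqa : Y (q : ℝ) ω < a :=
      hPw _ ⟨hq1.le, hq2.trans_le (min_le_left _ _)⟩
    have hqDD : (q : ℝ) ∈ DD := by
      refine Set.mem_insert_iff.2 (Or.inr ⟨⟨hu_mem.1.trans hq1.le, le_trans hqv.le hv_mem.2⟩,
        ⟨q, rfl⟩⟩)
    by_cases hvT : v i = T
    · refine ⟨((q : ℝ), T), hqDD, Set.mem_insert _ _, hq1, hqv, hvT.le, hqa, ?_, ?_⟩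
      · rw [← hvT]; exact hYv
      · intro j hij
        rw [← hvT]; exact h2 i j hij
    · have hvT' : v i < T := lt_of_le_of_ne hv_mem.2 hvT
      obtain ⟨w', hw', hPw'⟩ := right_nbhd (v i) (Set.Ioi b) isOpen_Ioi hYv
      set bnd : ℝ := if h : (i : ℕ) + 1 < n then u ⟨(i : ℕ) + 1, h⟩ else T + 1 with hbnd
      have hvbnd : v i < bnd := by
        rw [hbnd]
        split_ifs with h
        · exact h2 i ⟨(i : ℕ) + 1, h⟩ (by simp [Fin.lt_def])
        · linarith
      have hltr : v i < min w' (min T bnd) := lt_min hw' (lt_min hvT' hvbnd)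
      obtain ⟨r, hr1, hr2⟩ := exists_rat_btwn hltr
      have hrb : b < Y (r : ℝ) ω :=
        hPw' _ ⟨hr1.le, hr2.trans_le (min_le_left _ _)⟩
      have hrT : (r : ℝ) < T := hr2.trans_le ((min_le_right _ _).trans (min_le_left _ _))
      have hrbnd : (r : ℝ) < bnd := hr2.trans_le ((min_le_right _ _).trans (min_le_right _ _))
      have hrDD : (r : ℝ) ∈ DD :=
        Set.mem_insert_iff.2 (Or.inr ⟨⟨hv_mem.1.trans hr1.le, hrT.le⟩, ⟨r, rfl⟩⟩)
      refine ⟨((q : ℝ), (r : ℝ)), hqDD, hrDD, hq1, hqv, hr1.le, hqa, hrb, ?_⟩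
      intro j hij
      have hj1 : (i : ℕ) + 1 ≤ (j : ℕ) := hij
      have hj2 : (i : ℕ) + 1 < n := lt_of_le_of_lt hj1 j.isLt
      have hbnd' : bnd = u ⟨(i : ℕ) + 1, hj2⟩ := by rw [hbnd, dif_pos hj2]
      have huj : u ⟨(i : ℕ) + 1, hj2⟩ ≤ u j := by
        rcases eq_or_lt_of_le hj1 with h | h
        · exact le_of_eq (congrArg u (Fin.ext h))
        · have := h2 ⟨(i : ℕ) + 1, hj2⟩ j h
          exact le_of_lt (lt_trans (h1 ⟨(i : ℕ) + 1, hj2⟩).2.2.1 this)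
      calc (r : ℝ) < bnd := hrbnd
        _ ≤ u j := hbnd' ▸ huj
  choose c hc using key
  refine ⟨fun i => (c i).1, fun i => (c i).2, fun i => ?_, fun i j hij => ?_⟩
  · obtain ⟨m1, m2, h3, h4, h5, h6, h7, _⟩ := hc i
    exact ⟨m1, m2, lt_of_lt_of_le h4 h5, h6, h7⟩
  · obtain ⟨_, _, _, _, _, _, _, h8⟩ := hc i
    exact lt_trans (h8 j hij) (hc j).2.2.1

/-- Meyer–Zheng upcrossing estimate: for a càdlàg integrable adapted process `Y` with
conditional variation `CV(Y) ≤ cv`, and `a < b`,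
`E[N^{a,b}(Y)] ≤ (1/(b−a)) (|a| + CV(Y) + E[sup_{t≤T}|Y_t|])`. -/
theorem stmt_8 (T : ℝ) (hT : 0 < T) (a b : ℝ) (hab : a < b)
    {Ω : Type*} {m : MeasurableSpace Ω} (μ : Measure Ω) [IsProbabilityMeasure μ]
    (ℱ : Filtration ℝ m)
    (Y : ℝ → Ω → ℝ)
    (hY_adapted : Adapted ℱ Y)
    (hY_int : ∀ s, Integrable (Y s) μ)
    -- càdlàg paths
    (hY_rc : ∀ ω s, ContinuousWithinAt (fun u => Y u ω) (Set.Ici s) s)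
    (hY_ll : ∀ ω s, ∃ l, Filter.Tendsto (fun u => Y u ω)
      (nhdsWithin s (Set.Iio s)) (nhds l))
    -- the running supremum is integrable
    (hS_int : Integrable (fun ω => ⨆ s ∈ Set.Icc (0:ℝ) T, |Y s ω|) μ)
    -- `cv` bounds the conditional variation of `Y`
    (cv : ℝ)
    (hcv : ∀ (n : ℕ) (τ : Fin (n + 1) → ℝ), Monotone τ → (∀ i, τ i ∈ Set.Icc (0:ℝ) T) →
      τ (Fin.last n) = T →
      (∑ i : Fin n, ∫ ω,
          |(μ[fun ω' => Y (τ i.succ) ω' - Y (τ i.castSucc) ω' | ℱ (τ i.castSucc)]) ω| ∂μ) ≤ cv) :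
    (∫⁻ ω, ⨆ n ∈ {n : ℕ | upcrossProp Y T a b n ω}, (n : ENNReal) ∂μ) ≤
      ENNReal.ofReal ((1 / (b - a)) *
        (|a| + cv + ∫ ω, (⨆ s ∈ Set.Icc (0:ℝ) T, |Y s ω|) ∂μ)) := by
  classical
  -- the integrable running supremum
  set S : Ω → ℝ := fun ω => ⨆ s ∈ Set.Icc (0:ℝ) T, |Y s ω| with hSdef
  have hYTS : ∀ ω, |Y T ω| ≤ S ω := by
    intro ω
    obtain ⟨C, hC0, hC⟩ := path_bdd Y T hY_rc hY_ll ω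
    have hbdd : BddAbove (Set.range fun s : ℝ => ⨆ _ : s ∈ Set.Icc (0:ℝ) T, |Y s ω|) := by
      refine ⟨C, ?_⟩
      rintro x ⟨s, rfl⟩
      show (⨆ _ : s ∈ Set.Icc (0:ℝ) T, |Y s ω|) ≤ C
      by_cases hs : s ∈ Set.Icc (0:ℝ) T
      · rw [ciSup_pos hs]; exact hC s hs
      · haveI : IsEmpty (s ∈ Set.Icc (0:ℝ) T) := ⟨hs⟩
        rw [Real.iSup_of_isEmpty]; exact hC0
    have hT0 : T ∈ Set.Icc (0:ℝ) T := ⟨hT.le, le_rfl⟩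
    calc |Y T ω| = ⨆ _ : T ∈ Set.Icc (0:ℝ) T, |Y T ω| :=
          (ciSup_pos (f := fun _ => |Y T ω|) hT0).symm
      _ ≤ S ω := le_ciSup hbdd T
  have hPT : Integrable (fun ω => (a - Y T ω)⁺) μ := by
    have : Integrable (fun ω => max (a - Y T ω) 0) μ :=
      (((integrable_const a).sub (hY_int T))).pos_part
    simpa [posPart_def] using this
  have hSTineq : ∫ ω, (a - Y T ω)⁺ ∂μ ≤ |a| + ∫ ω, S ω ∂μ := by
    have h2 : Integrable (fun ω => |a| + S ω) μ := (integrable_const _).add hS_int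
    have hmono : ∫ ω, (a - Y T ω)⁺ ∂μ ≤ ∫ ω, (|a| + S ω) ∂μ := by
      refine integral_mono hPT h2 fun ω => ?_
      have h3 : a - Y T ω ≤ |a| + S ω := by
        have := hYTS ω
        have h4 : -Y T ω ≤ |Y T ω| := neg_le_abs _
        have h5 : a ≤ |a| := le_abs_self _
        linarith
      have h6 : (0:ℝ) ≤ |a| + S ω := by
        have := (abs_nonneg (Y T ω)).trans (hYTS ω); positivity
      rw [posPart_def]
      exact max_le h3 h6
    rwa [integral_add (integrable_const _) hS_int, integral_const, probReal_univ,
      one_smul] at hmono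
  -- the countable set of admissible times
  set DD : Set ℝ := insert T {x : ℝ | x ∈ Set.Icc 0 T ∧ ∃ q : ℚ, (q : ℝ) = x} with hDD
  have hDDc : DD.Countable := by
    refine Set.Countable.insert T ?_
    refine Set.Countable.mono (fun x hx => ?_) (Set.countable_range fun q : ℚ => (q : ℝ))
    exact hx.2
  obtain ⟨d, hd⟩ := hDDc.exists_eq_range ⟨T, Set.mem_insert _ _⟩
  have hDIcc : DD ⊆ Set.Icc 0 T := by
    intro x hx
    rcases Set.mem_insert_iff.1 hx with h | h
    · subst h; exact ⟨hT.le, le_rfl⟩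
    · exact h.1
  set F : ℕ → Finset ℝ := fun k => insert T ((Finset.range (k + 1)).image d) with hF
  have hFT : ∀ k, T ∈ F k := fun k => Finset.mem_insert_self _ _
  have hFsub : ∀ k, ↑(F k) ⊆ DD := by
    intro k x hx
    rcases Finset.mem_insert.1 hx with h | h
    · exact h ▸ Set.mem_insert _ _
    · obtain ⟨j, _, rfl⟩ := Finset.mem_image.1 h
      rw [hd]; exact Set.mem_range_self j
  have hFmono : ∀ ⦃k k'⦄, k ≤ k' → F k ⊆ F k' := by
    intro k k' hk
    exact Finset.insert_subset_insert _
      (Finset.image_subset_image (Finset.range_subset_range.2 (by omega)))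
  set V : ℕ → Ω → ENNReal := fun k ω => ⨆ n ∈ {n : ℕ | upcrossWit Y a b (F k) n ω}, (n : ENNReal)
    with hV
  have hVmeas : ∀ k, Measurable (V k) := by
    intro k
    refine Measurable.iSup fun n => ?_
    have : (fun ω => ⨆ _ : n ∈ {n : ℕ | upcrossWit Y a b (F k) n ω}, (n : ENNReal)) =
        Set.indicator {ω | upcrossWit Y a b (F k) n ω} (fun _ => (n : ENNReal)) := by
      ext ω
      by_cases h : upcrossWit Y a b (F k) n ω <;> simp [h]
    rw [this]
    exact measurable_const.indicator (upcrossWit_measurableSet ℱ hY_adapted a b (F k) n)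
  have hVmono : Monotone V := by
    intro k k' hk ω
    refine iSup₂_le fun n hn => ?_
    exact le_iSup₂ (f := fun (n : ℕ) (_ : n ∈ {n : ℕ | upcrossWit Y a b (F k') n ω}) =>
      (n : ENNReal)) n (upcrossWit_mono (hFmono hk) hn)
  have pointwise1 : ∀ ω, (⨆ n ∈ {n : ℕ | upcrossProp Y T a b n ω}, (n : ENNReal)) ≤
      ⨆ k, V k ω := by
    intro ω
    refine iSup₂_le fun n hn => ?_
    obtain ⟨u, v, h1, h2⟩ := upcross_approx Y T a b hY_rc n ω hn
    have hu : ∀ i : Fin n, ∃ j, d j = u i := by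
      intro i
      have := (h1 i).1
      rw [← hDD, hd] at this
      exact this
    have hv : ∀ i : Fin n, ∃ j, d j = v i := by
      intro i
      have := (h1 i).2.1
      rw [← hDD, hd] at this
      exact this
    choose mu hmu using hu
    choose mv hmv using hv
    obtain ⟨k, hkb⟩ : ∃ k, ∀ i : Fin n, mu i ≤ k ∧ mv i ≤ k := by
      refine ⟨Finset.univ.sup fun i : Fin n => max (mu i) (mv i), fun i => ?_⟩
      have h := Finset.le_sup (f := fun i : Fin n => max (mu i) (mv i)) (Finset.mem_univ i)
      exact ⟨le_trans (le_max_left _ _) h, le_trans (le_max_right _ _) h⟩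
    have humem : ∀ i, u i ∈ F k := by
      intro i
      refine Finset.mem_insert_of_mem (Finset.mem_image.2 ⟨mu i, Finset.mem_range.2 ?_, hmu i⟩)
      have := (hkb i).1
      omega
    have hvmem : ∀ i, v i ∈ F k := by
      intro i
      refine Finset.mem_insert_of_mem (Finset.mem_image.2 ⟨mv i, Finset.mem_range.2 ?_, hmv i⟩)
      have := (hkb i).2
      omega
    have hwit : upcrossWit Y a b (F k) n ω :=
      ⟨u, v, fun i => ⟨humem i, hvmem i, (h1 i).2.2⟩, h2⟩
    calc (n : ENNReal) ≤ V k ω :=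
          le_iSup₂ (f := fun (n : ℕ) (_ : n ∈ {n : ℕ | upcrossWit Y a b (F k) n ω}) =>
            (n : ENNReal)) n hwit
      _ ≤ ⨆ k, V k ω := le_iSup (fun k => V k ω) k
  have perk : ∀ k, ∫⁻ ω, V k ω ∂μ ≤
      ENNReal.ofReal ((1 / (b - a)) * (|a| + cv + ∫ ω, S ω ∂μ)) := by
    intro k
    obtain ⟨mm, hc⟩ : ∃ mm, (F k).card = mm + 1 := by
      have : 0 < (F k).card := Finset.card_pos.2 ⟨T, hFT k⟩
      exact ⟨(F k).card - 1, by omega⟩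
    set σ := (F k).orderIsoOfFin hc with hσ
    set τ : Fin (mm + 1) → ℝ := fun i => (σ i : ℝ) with hτ
    have hτmono : Monotone τ := fun i j hij => Subtype.coe_le_coe.2 (σ.monotone hij)
    have hτIcc : ∀ i, τ i ∈ Set.Icc (0:ℝ) T := fun i => hDIcc (hFsub k (σ i).2)
    have hτlast : τ (Fin.last mm) = T := by
      have h1 : τ (Fin.last mm) ≤ T := (hτIcc _).2
      have h2 : T ≤ τ (Fin.last mm) := by
        obtain ⟨iT, hiT⟩ : ∃ i, τ i = T := ⟨σ.symm ⟨T, hFT k⟩, by simp [hτ]⟩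
        calc T = τ iT := hiT.symm
          _ ≤ τ (Fin.last mm) := hτmono (Fin.le_last iT)
      linarith
    set pt : ℕ → Fin (mm + 1) := fun j => ⟨min j mm, Nat.lt_succ_of_le (min_le_right _ _)⟩
      with hpt
    set f : ℕ → Ω → ℝ := fun j => Y (τ (pt j)) with hf
    set 𝒢 : Filtration ℕ m := ⟨fun j => ℱ (τ (pt j)), fun i j hij => ℱ.mono (hτmono (by
        simp only [hpt, Fin.mk_le_mk]; omega)), fun j => ℱ.le _⟩ with h𝒢
    have hfad : Adapted 𝒢 f := fun j => hY_adapted _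
    have hfint : ∀ j, Integrable (f j) μ := fun j => hY_int _
    have pointwise2 : ∀ ω, V k ω ≤ (upcrossingsBefore a b f (mm + 1) ω : ENNReal) := by
      intro ω
      refine iSup₂_le fun n hn => ?_
      obtain ⟨u, v, h1, h2⟩ := hn
      have hum : ∀ i, u i ∈ F k := fun i => (h1 i).1
      have hvm : ∀ i, v i ∈ F k := fun i => (h1 i).2.1
      set p : Fin n → Fin (mm + 1) := fun i => σ.symm ⟨u i, hum i⟩ with hp
      set q : Fin n → Fin (mm + 1) := fun i => σ.symm ⟨v i, hvm i⟩ with hq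
      have hτp : ∀ i, τ (p i) = u i := fun i => by simp [hτ, hp]
      have hτq : ∀ i, τ (q i) = v i := fun i => by simp [hτ, hq]
      have hptp : ∀ i, pt ((p i : ℕ)) = p i := fun i =>
        Fin.ext (by simp [hpt, Nat.min_eq_left (Nat.lt_succ_iff.1 (p i).isLt)])
      have hptq : ∀ i, pt ((q i : ℕ)) = q i := fun i =>
        Fin.ext (by simp [hpt, Nat.min_eq_left (Nat.lt_succ_iff.1 (q i).isLt)])
      have hfp : ∀ i, f ((p i : ℕ)) ω < a := by
        intro i
        show Y (τ (pt ((p i : ℕ)))) ω < a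
        rw [hptp i, hτp i]
        exact (h1 i).2.2.2.1
      have hfq : ∀ i, b < f ((q i : ℕ)) ω := by
        intro i
        show b < Y (τ (pt ((q i : ℕ)))) ω
        rw [hptq i, hτq i]
        exact (h1 i).2.2.2.2
      have hpq : ∀ i, (p i : ℕ) < (q i : ℕ) := by
        intro i
        exact (σ.symm.lt_iff_lt.2 (Subtype.mk_lt_mk.2 (h1 i).2.2.1) : p i < q i)
      have hqp : ∀ i j, i < j → (q i : ℕ) < (p j : ℕ) := by
        intro i j hij
        exact (σ.symm.lt_iff_lt.2 (Subtype.mk_lt_mk.2 (h2 i j hij)) : q i < p j)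
      have := seq_upcross a b hab f ω (mm + 1) n (fun i => (p i : ℕ)) (fun i => (q i : ℕ))
        hpq hqp (fun i => (q i).isLt) hfp hfq
      exact Nat.cast_le.2 this
    have hcvsum : ∑ j ∈ Finset.range (mm + 1), ∫ ω, |(μ[f (j + 1) - f j | 𝒢 j]) ω| ∂μ ≤ cv := by
      rw [Finset.sum_range_succ]
      have hlast : f (mm + 1) = f mm := by
        have hptl : pt (mm + 1) = pt mm := Fin.ext (by simp [hpt])
        show Y (τ (pt (mm + 1))) = Y (τ (pt mm))
        rw [hptl]
      have hzero : (∫ ω, |(μ[f (mm + 1) - f mm | 𝒢 mm]) ω| ∂μ) = 0 := by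
        rw [hlast, sub_self, condExp_zero]
        simp
      rw [hzero, add_zero,
        ← Fin.sum_univ_eq_sum_range (fun j => ∫ ω, |(μ[f (j + 1) - f j | 𝒢 j]) ω| ∂μ) mm]
      refine le_trans (le_of_eq (Finset.sum_congr rfl fun i _ => ?_))
        (hcv mm τ hτmono hτIcc hτlast)
      have e1 : pt ((i : ℕ) + 1) = i.succ := Fin.ext (by simp [hpt])
      have e2 : pt ((i : ℕ)) = i.castSucc := Fin.ext (by simp [hpt])
      have ef : f ((i : ℕ) + 1) - f ((i : ℕ)) =
          fun ω' => Y (τ i.succ) ω' - Y (τ i.castSucc) ω' := by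
        funext ω'
        show Y (τ (pt ((i : ℕ) + 1))) ω' - Y (τ (pt ((i : ℕ)))) ω' = _
        rw [e1, e2]
      have eG : 𝒢 ((i : ℕ)) = ℱ (τ i.castSucc) := by
        show ℱ (τ (pt ((i : ℕ)))) = _
        rw [e2]
      rw [ef, eG]
    have core := partition_core μ 𝒢 f hfad hfint a b hab (mm + 1) cv hcvsum
    have hfM : f (mm + 1) = Y T := by
      have hptl : pt (mm + 1) = Fin.last mm := Fin.ext (by simp [hpt])
      show Y (τ (pt (mm + 1))) = Y T
      rw [hptl, hτlast]
    rw [hfM] at core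
    have hreal : ∫ ω, (upcrossingsBefore a b f (mm + 1) ω : ℝ) ∂μ ≤
        (1 / (b - a)) * (|a| + cv + ∫ ω, S ω ∂μ) := by
      have hba : (0:ℝ) < b - a := sub_pos.2 hab
      have h1 : (b - a) * ∫ ω, (upcrossingsBefore a b f (mm + 1) ω : ℝ) ∂μ ≤
          |a| + cv + ∫ ω, S ω ∂μ := by
        calc (b - a) * ∫ ω, (upcrossingsBefore a b f (mm + 1) ω : ℝ) ∂μ
            ≤ cv + ∫ ω, (a - Y T ω)⁺ ∂μ := core
          _ ≤ cv + (|a| + ∫ ω, S ω ∂μ) := by linarith [hSTineq]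
          _ = |a| + cv + ∫ ω, S ω ∂μ := by ring
      rw [one_div, ← div_eq_inv_mul, le_div_iff₀ hba]
      linarith [h1]
    have hUint : Integrable (fun ω => (upcrossingsBefore a b f (mm + 1) ω : ℝ)) μ :=
      hfad.stronglyAdapted.integrable_upcrossingsBefore hab
    calc ∫⁻ ω, V k ω ∂μ
        ≤ ∫⁻ ω, (upcrossingsBefore a b f (mm + 1) ω : ENNReal) ∂μ :=
          lintegral_mono pointwise2
      _ = ∫⁻ ω, ENNReal.ofReal ((upcrossingsBefore a b f (mm + 1) ω : ℝ)) ∂μ :=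
          lintegral_congr fun ω => (ENNReal.ofReal_natCast _).symm
      _ = ENNReal.ofReal (∫ ω, (upcrossingsBefore a b f (mm + 1) ω : ℝ) ∂μ) :=
          (ofReal_integral_eq_lintegral_ofReal hUint
            (Filter.Eventually.of_forall fun ω => Nat.cast_nonneg _)).symm
      _ ≤ _ := ENNReal.ofReal_le_ofReal hreal
  calc (∫⁻ ω, ⨆ n ∈ {n : ℕ | upcrossProp Y T a b n ω}, (n : ENNReal) ∂μ)
      ≤ ∫⁻ ω, ⨆ k, V k ω ∂μ := lintegral_mono pointwise1
    _ = ⨆ k, ∫⁻ ω, V k ω ∂μ := lintegral_iSup hVmeas hVmono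
    _ ≤ _ := iSup_le perk
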